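/- In B ⊗ ℤ[1/n], the element Z_n lies in the (Λ_n ⊗ ℤ[1/n])-subalgebra of B ⊗ ℤ[1/n] generated by the 3n − 1 elements X_1,…,X_n, Y_1,…,Y_n, Z_1,…,Z_{n−1}. -/

import Mathlib

open scoped BigOperators

set_option synthInstance.maxHeartbeats 1000000
set_option maxHeartbeats 1000000

noncomputable section

variable (R : Type) [CommRing R] (n : ℕ)

/-- The polynomial ring `R[t_1, …, t_n]`. -/
abbrev Pn := MvPolynomial (Fin n) R

/-- `B`: the exterior algebra over `Pn` on the `2n` generators `u_1,…,u_n,v_1,…,v_n`. -/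
abbrev Bn := ExteriorAlgebra (Pn R n) ((Fin n ⊕ Fin n) → Pn R n)

/-- The variable `t_i`. -/
def tv (i : Fin n) : Pn R n := MvPolynomial.X i

/-- The exterior generator `u_i`. -/
def uu (i : Fin n) : Bn R n := ExteriorAlgebra.ι (Pn R n) (Pi.single (Sum.inl i) 1)

/-- The exterior generator `v_i`. -/
def vv (i : Fin n) : Bn R n := ExteriorAlgebra.ι (Pn R n) (Pi.single (Sum.inr i) 1)

/-- `X_l = ∑ t_i^(l-1) u_i` (indices `i` run over `Fin n`, `l ≥ 1`). -/
def Xel (l : ℕ) : Bn R n :=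
  ∑ i : Fin n, algebraMap (Pn R n) (Bn R n) (tv R n i ^ (l - 1)) * uu R n i

/-- `Y_l = ∑ t_i^(l-1) v_i`. -/
def Yel (l : ℕ) : Bn R n :=
  ∑ i : Fin n, algebraMap (Pn R n) (Bn R n) (tv R n i ^ (l - 1)) * vv R n i

/-- `X_I`, the product of the `X_{i+1}` for `i ∈ I`, in increasing order. -/
def XI (I : Finset (Fin n)) : Bn R n := ((I.sort (· ≤ ·)).map fun i => Xel R n (i.1 + 1)).prod

/-- `Y_I`, the product of the `Y_{i+1}` for `i ∈ I`, in increasing order. -/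
def YI (I : Finset (Fin n)) : Bn R n := ((I.sort (· ≤ ·)).map fun i => Yel R n (i.1 + 1)).prod

/-- `(1 + p s)⁻¹ = ∑ (-p)^k s^k`, the inverse of `1 + p s` in `Pn[[s]]`. -/
def invOnePlus (p : Pn R n) : PowerSeries (Pn R n) := PowerSeries.mk fun k => (-p) ^ k

/-- The `i`-th factor `1 + s u_i v_i (1 + t_i s)⁻¹` of the power series defining the `Z_l`. -/
def Zfactor (i : Fin n) : PowerSeries (Bn R n) :=
  1 + PowerSeries.C (uu R n i * vv R n i) *
    PowerSeries.map (algebraMap (Pn R n) (Bn R n)) (PowerSeries.X * invOnePlus R n (tv R n i))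

/-- The power series `∏_{i=1}^n (1 + s u_i v_i (1 + t_i s)⁻¹) ∈ B[[s]]`. -/
def Zseries : PowerSeries (Bn R n) := ((List.finRange n).map (Zfactor R n)).prod

/-- `Z_l`, the coefficient of `s^l` in `Zseries`. -/
def Zel (l : ℕ) : Bn R n := PowerSeries.coeff l (Zseries R n)

/-- The Vandermonde matrix `V = (t_j^(i-1))`. -/
def Vmat : Matrix (Fin n) (Fin n) (Pn R n) := Matrix.of fun i j => tv R n j ^ (i : ℕ)

/-- The Vandermonde determinant `Δ = det V = ∏_{i<j} (t_j - t_i)`. -/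
def Dl : Pn R n := (Vmat R n).det


-- ============ auxiliary development ============
section Aux

open PowerSeries Finset.Nat Finset

/-- formal derivative for noncommutative coefficient rings -/
def Dser {A : Type*} [Semiring A] (f : PowerSeries A) : PowerSeries A :=
  PowerSeries.mk fun m => (m + 1) • PowerSeries.coeff (m + 1) f

variable {A : Type*} [Semiring A]

@[simp] lemma coeff_Dser (f : PowerSeries A) (m : ℕ) :
    PowerSeries.coeff m (Dser f) = (m + 1) • PowerSeries.coeff (m + 1) f :=
  PowerSeries.coeff_mk _ _

lemma Dser_add (f g : PowerSeries A) : Dser (f + g) = Dser f + Dser g := by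
  ext m; simp

lemma Dser_one : Dser (1 : PowerSeries A) = 0 := by
  ext m; simp [PowerSeries.coeff_one]

lemma Dser_C_mul (a : A) (f : PowerSeries A) : Dser (PowerSeries.C a * f) =
    PowerSeries.C a * Dser f := by
  ext m
  have h : ((m : A) + 1) * a = a * ((m : A) + 1) :=
    ((Nat.cast_commute m a).add_left (Commute.one_left a)).eq
  simp only [coeff_Dser, PowerSeries.coeff_C_mul, nsmul_eq_mul, Nat.cast_add, Nat.cast_one]
  rw [← mul_assoc, h, mul_assoc]

lemma Dser_mul (f g : PowerSeries A) : Dser (f * g) = Dser f * g + f * Dser g := by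
  ext m
  rw [coeff_Dser, map_add, PowerSeries.coeff_mul, PowerSeries.coeff_mul, PowerSeries.coeff_mul]
  rw [Finset.smul_sum]
  have h1 : ∀ p ∈ antidiagonal (m + 1),
      (m + 1) • (PowerSeries.coeff p.1 f * PowerSeries.coeff p.2 g)
      = p.1 • (PowerSeries.coeff p.1 f * PowerSeries.coeff p.2 g)
        + p.2 • (PowerSeries.coeff p.1 f * PowerSeries.coeff p.2 g) := by
    intro p hp
    rw [← add_smul, mem_antidiagonal.mp hp]
  rw [Finset.sum_congr rfl h1, Finset.sum_add_distrib]
  congr 1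
  · rw [sum_antidiagonal_succ]
    simp only [zero_smul, zero_add]
    refine Finset.sum_congr rfl fun p _ => ?_
    simp only [coeff_Dser, nsmul_eq_mul, Nat.cast_add, Nat.cast_one]
    rw [mul_assoc]
  · rw [sum_antidiagonal_succ']
    simp only [zero_smul, zero_add]
    refine Finset.sum_congr rfl fun p _ => ?_
    simp only [coeff_Dser, nsmul_eq_mul, Nat.cast_add, Nat.cast_one]
    rw [← mul_assoc,
      ((Nat.cast_commute p.2 (PowerSeries.coeff p.1 f)).add_left
        (Commute.one_left _)).eq, mul_assoc]

lemma Dser_map {B : Type*} [Semiring B] (φ : A →+* B) (f : PowerSeries A) :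
    Dser (PowerSeries.map φ f) = PowerSeries.map φ (Dser f) := by
  ext m; simp

/-- power series all whose coefficients are central -/
def CCser (f : PowerSeries A) : Prop := ∀ (m : ℕ) (x : A), Commute (PowerSeries.coeff m f) x

lemma CCser.comm {f : PowerSeries A} (hf : CCser f) (g : PowerSeries A) : f * g = g * f := by
  ext m
  rw [PowerSeries.coeff_mul, PowerSeries.coeff_mul, ← Finset.Nat.sum_antidiagonal_swap]
  exact Finset.sum_congr rfl fun p _ => (hf p.2 _).eq

lemma CCser.add {f g : PowerSeries A} (hf : CCser f) (hg : CCser g) : CCser (f + g) := by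
  intro m x
  rw [map_add]
  exact (hf m x).add_left (hg m x)

lemma CCser.one : CCser (1 : PowerSeries A) := by
  intro m x
  rw [PowerSeries.coeff_one]
  split <;> simp [Commute.one_left, Commute.zero_left]

end Aux

section Central

open PowerSeries Finset.Nat Finset

variable {M : Type*}

local notation "φB" => algebraMap (Pn R n) (Bn R n)

lemma iota_swap (a b : (Fin n ⊕ Fin n) → Pn R n) :
    ExteriorAlgebra.ι (Pn R n) a * ExteriorAlgebra.ι (Pn R n) b
      = -(ExteriorAlgebra.ι (Pn R n) b * ExteriorAlgebra.ι (Pn R n) a) :=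
  eq_neg_of_add_eq_zero_left (ExteriorAlgebra.ι_add_mul_swap a b)

lemma pair_sq (a b : (Fin n ⊕ Fin n) → Pn R n) :
    (ExteriorAlgebra.ι (Pn R n) a * ExteriorAlgebra.ι (Pn R n) b)
      * (ExteriorAlgebra.ι (Pn R n) a * ExteriorAlgebra.ι (Pn R n) b) = 0 := by
  set x := ExteriorAlgebra.ι (Pn R n) a
  set y := ExteriorAlgebra.ι (Pn R n) b
  have h : y * x = -(x * y) := iota_swap R n b a
  calc x * y * (x * y) = x * (y * x) * y := by noncomm_ring
    _ = x * (-(x * y)) * y := by rw [h]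
    _ = -(x * x * (y * y)) := by noncomm_ring
    _ = 0 := by rw [ExteriorAlgebra.ι_sq_zero]; simp

lemma pair_commute (a b : (Fin n ⊕ Fin n) → Pn R n) (z : Bn R n) :
    Commute (ExteriorAlgebra.ι (Pn R n) a * ExteriorAlgebra.ι (Pn R n) b) z := by
  set x := ExteriorAlgebra.ι (Pn R n) a with hx
  set y := ExteriorAlgebra.ι (Pn R n) b with hy
  induction z using ExteriorAlgebra.induction with
  | algebraMap r => exact (Algebra.commutes r (x * y)).symm
  | ι m =>
      set w := ExteriorAlgebra.ι (Pn R n) m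
      show x * y * w = w * (x * y)
      calc x * y * w = x * (y * w) := by rw [mul_assoc]
        _ = x * (-(w * y)) := by rw [hy, iota_swap]
        _ = -(x * w) * y := by noncomm_ring
        _ = (w * x) * y := by rw [hx, iota_swap R n a m, neg_neg]
        _ = w * (x * y) := by rw [mul_assoc]
  | mul u w hu hw => exact hu.mul_right hw
  | add u w hu hw => exact hu.add_right hw

/-- `w_i = u_i v_i`. -/
def ww (i : Fin n) : Bn R n := uu R n i * vv R n i

lemma ww_commute (i : Fin n) (z : Bn R n) : Commute (ww R n i) z := pair_commute R n _ _ z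

lemma ww_sq (i : Fin n) : ww R n i * ww R n i = 0 := pair_sq R n _ _

end Central


section Series

open PowerSeries Finset.Nat Finset

local notation "φB" => algebraMap (Pn R n) (Bn R n)

lemma CC_map (h : PowerSeries (Pn R n)) :
    CCser (PowerSeries.map (φB : Pn R n →+* Bn R n) h) := by
  intro m x
  rw [PowerSeries.coeff_map]
  exact Algebra.commutes _ x

lemma CC_C_mul_map (b : Bn R n) (hb : ∀ z, Commute b z) (h : PowerSeries (Pn R n)) :
    CCser (PowerSeries.C b * PowerSeries.map (φB : Pn R n →+* Bn R n) h) := by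
  intro m x
  rw [PowerSeries.coeff_C_mul]
  exact (hb x).mul_left (CC_map R n h m x)

lemma CC_Zfactor (i : Fin n) : CCser (Zfactor R n i) :=
  CCser.one.add (CC_C_mul_map R n _ (ww_commute R n i) _)

/-- the derivative of the `i`-th factor -/
def DZf (i : Fin n) : PowerSeries (Bn R n) :=
  PowerSeries.C (ww R n i) *
    PowerSeries.map (φB : Pn R n →+* Bn R n) (invOnePlus R n (tv R n i) ^ 2)

lemma CC_DZf (i : Fin n) : CCser (DZf R n i) :=
  CC_C_mul_map R n _ (ww_commute R n i) _

lemma coeff_invOnePlus (p : Pn R n) (k : ℕ) :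
    PowerSeries.coeff k (invOnePlus R n p) = (-p) ^ k := PowerSeries.coeff_mk _ _

lemma coeff_invOnePlus_sq (p : Pn R n) (k : ℕ) :
    PowerSeries.coeff k (invOnePlus R n p ^ 2) = (k + 1) • (-p) ^ k := by
  rw [sq, PowerSeries.coeff_mul]
  have : ∀ q ∈ antidiagonal k,
      PowerSeries.coeff q.1 (invOnePlus R n p) *
        PowerSeries.coeff q.2 (invOnePlus R n p) = (-p) ^ k := by
    intro q hq
    rw [coeff_invOnePlus, coeff_invOnePlus, ← pow_add, mem_antidiagonal.mp hq]
  rw [Finset.sum_congr rfl this, Finset.sum_const, Finset.Nat.card_antidiagonal]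

lemma Dser_X_mul_invOnePlus (p : Pn R n) :
    Dser (PowerSeries.X * invOnePlus R n p) = invOnePlus R n p ^ 2 := by
  ext k
  rw [coeff_Dser, PowerSeries.coeff_succ_X_mul, coeff_invOnePlus, coeff_invOnePlus_sq]

lemma Dser_Zfactor (i : Fin n) : Dser (Zfactor R n i) = DZf R n i := by
  rw [Zfactor, Dser_add, Dser_one, zero_add, Dser_C_mul, Dser_map, Dser_X_mul_invOnePlus]
  rfl

lemma C_ww_mul_Zfactor (i : Fin n) (h : PowerSeries (Pn R n)) :
    (PowerSeries.C (ww R n i) * PowerSeries.map (φB : Pn R n →+* Bn R n) h)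
      * Zfactor R n i
    = PowerSeries.C (ww R n i) * PowerSeries.map (φB : Pn R n →+* Bn R n) h := by
  have hww : uu R n i * vv R n i = ww R n i := rfl
  set Cw := PowerSeries.C (ww R n i) with hCw
  set H := PowerSeries.map (φB : Pn R n →+* Bn R n) h with hH
  set G := PowerSeries.map (φB : Pn R n →+* Bn R n)
      (PowerSeries.X * invOnePlus R n (tv R n i)) with hG
  have key : (Cw * H) * (Cw * G) = 0 := by
    calc (Cw * H) * (Cw * G) = Cw * ((H * Cw) * G) := by noncomm_ring
      _ = Cw * ((Cw * H) * G) := by rw [(CC_map R n h).comm Cw]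
      _ = (Cw * Cw) * (H * G) := by noncomm_ring
      _ = 0 := by rw [hCw, ← map_mul, ww_sq, map_zero, zero_mul]
  rw [Zfactor, hww, ← hCw, ← hG, mul_add, mul_one, key, add_zero]

lemma DZf_mul_Zfactor (i : Fin n) : DZf R n i * Zfactor R n i = DZf R n i :=
  C_ww_mul_Zfactor R n i _

lemma Dser_prod_Zf (l : List (Fin n)) :
    Dser ((l.map (Zfactor R n)).prod)
      = ((l.map (DZf R n)).sum) * (l.map (Zfactor R n)).prod := by
  induction l with
  | nil => simp [Dser_one]
  | cons i l ih =>
      rw [List.map_cons, List.map_cons, List.prod_cons, List.sum_cons, Dser_mul, ih,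
        Dser_Zfactor]
      set S := (l.map (DZf R n)).sum with hS
      set P := (l.map (Zfactor R n)).prod with hP
      have hcomm : Zfactor R n i * S = S * Zfactor R n i := (CC_Zfactor R n i).comm S
      calc DZf R n i * P + Zfactor R n i * (S * P)
          = DZf R n i * P + (Zfactor R n i * S) * P := by rw [mul_assoc]
        _ = DZf R n i * P + (S * Zfactor R n i) * P := by rw [hcomm]
        _ = (DZf R n i * Zfactor R n i) * P + (S * Zfactor R n i) * P := by
            rw [DZf_mul_Zfactor]
        _ = (DZf R n i + S) * (Zfactor R n i * P) := by
            rw [add_mul, mul_assoc, mul_assoc]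

/-- the logarithmic-derivative series `G` -/
def Gser : PowerSeries (Bn R n) := ((List.finRange n).map (DZf R n)).sum

lemma Dser_Zseries : Dser (Zseries R n) = Gser R n * Zseries R n :=
  Dser_prod_Zf R n (List.finRange n)

/-- the coefficients of `G` -/
def Gc (k : ℕ) : Bn R n :=
  ∑ i : Fin n, ww R n i * (φB ((k + 1) • (- tv R n i) ^ k))

lemma coeff_Gser (k : ℕ) : PowerSeries.coeff k (Gser R n) = Gc R n k := by
  rw [Gser, map_list_sum, List.map_map, Gc, Fin.sum_univ_def]
  congr 1
  refine List.map_congr_left fun i _ => ?_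
  rw [Function.comp_apply, DZf, PowerSeries.coeff_C_mul, PowerSeries.coeff_map,
    coeff_invOnePlus_sq]

lemma Zel_zero : Zel R n 0 = 1 := by
  rw [Zel, PowerSeries.coeff_zero_eq_constantCoeff, Zseries, map_list_prod, List.map_map]
  refine List.prod_eq_one fun x hx => ?_
  obtain ⟨i, _, rfl⟩ := List.mem_map.mp hx
  rw [Function.comp_apply, Zfactor, map_add, map_one, map_mul, PowerSeries.constantCoeff_C]
  have h0 : (PowerSeries.constantCoeff)
      ((PowerSeries.map (φB : Pn R n →+* Bn R n))
        (PowerSeries.X * invOnePlus R n (tv R n i))) = 0 := by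
    rw [← PowerSeries.coeff_zero_eq_constantCoeff_apply, PowerSeries.coeff_map,
      PowerSeries.coeff_zero_X_mul, map_zero]
  rw [h0, mul_zero, add_zero]

lemma key_recursion (m : ℕ) :
    (m + 1) • Zel R n (m + 1)
      = ∑ p ∈ antidiagonal m, Gc R n p.1 * Zel R n p.2 := by
  have h := congrArg (PowerSeries.coeff m) (Dser_Zseries R n)
  rw [coeff_Dser, PowerSeries.coeff_mul] at h
  rw [Zel, h]
  exact Finset.sum_congr rfl fun p _ => by rw [coeff_Gser, Zel]

end Series


section Identity

open PowerSeries Finset.Nat Finset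

local notation "φB" => algebraMap (Pn R n) (Bn R n)
local notation "Es" => MvPolynomial.esymm (Fin n) R

lemma sign_flip {S : Type*} [CommRing S] (a b : ℕ) (h : b ≤ a) :
    ((-1 : S)) ^ a * (-1) ^ (a - b) = (-1) ^ b := by
  have h2 : a - b + b = a := Nat.sub_add_cancel h
  have e1 : ((-1 : S)) ^ (a - b) * (-1) ^ (a - b) = 1 := by
    rw [← pow_add]; exact Even.neg_one_pow ⟨a - b, rfl⟩
  calc ((-1 : S)) ^ a * (-1) ^ (a - b)
      = (-1) ^ (a - b + b) * (-1) ^ (a - b) := by rw [h2]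
    _ = ((-1) ^ (a - b) * (-1) ^ b) * (-1) ^ (a - b) := by rw [pow_add]
    _ = ((-1) ^ (a - b) * (-1) ^ (a - b)) * (-1) ^ b := by ring
    _ = (-1) ^ b := by rw [e1, one_mul]

lemma sum_antidiag_pow_mul_sub (x y : Pn R n) (m : ℕ) :
    (∑ p ∈ antidiagonal m, x ^ p.1 * y ^ p.2) * (x - y) = x ^ (m + 1) - y ^ (m + 1) := by
  rw [Finset.Nat.sum_antidiagonal_eq_sum_range_succ_mk]
  have h := geom_sum₂_mul x y (m + 1)
  simpa using h

lemma sum_antidiag_pow_diag (x : Pn R n) (m : ℕ) :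
    ∑ p ∈ antidiagonal m, x ^ p.1 * x ^ p.2 = (m + 1) • x ^ m := by
  have h : ∀ p ∈ antidiagonal m, x ^ p.1 * x ^ p.2 = x ^ m := fun p hp => by
    rw [← pow_add, mem_antidiagonal.mp hp]
  rw [Finset.sum_congr rfl h, Finset.sum_const, Finset.Nat.card_antidiagonal]

lemma vieta_zero (i : Fin n) :
    ∑ c ∈ range (n + 1), (-1 : Pn R n) ^ c * Es c * tv R n i ^ (n - c) = 0 := by
  have h0 := MvPolynomial.prod_C_add_X_eq_sum_esymm R (Fin n)
  rw [Fintype.card_fin] at h0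
  have h := congrArg (Polynomial.eval (-(tv R n i))) h0
  rw [Polynomial.eval_prod] at h
  simp only [Polynomial.eval_add, Polynomial.eval_X, Polynomial.eval_C,
    Polynomial.eval_finset_sum, Polynomial.eval_mul, Polynomial.eval_pow] at h
  have h2 : (∑ c ∈ range (n + 1), Es c * (-(tv R n i)) ^ (n - c)) = 0 := by
    rw [← h]
    exact Finset.prod_eq_zero (Finset.mem_univ i) (neg_add_cancel (tv R n i))
  have key : ∀ c ∈ range (n + 1), (-1 : Pn R n) ^ c * Es c * tv R n i ^ (n - c)
      = (-1) ^ n * (Es c * (-(tv R n i)) ^ (n - c)) := by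
    intro c hc
    have hcn : c ≤ n := Nat.lt_succ_iff.mp (mem_range.mp hc)
    rw [neg_pow]
    rw [← sign_flip (S := Pn R n) n c hcn]
    ring
  rw [Finset.sum_congr rfl key, ← Finset.mul_sum, h2, mul_zero]

/-- the two-variable polynomial detecting the diagonal -/
def RijP (i j : Fin n) : Pn R n :=
  ∑ c ∈ range n, (-1) ^ c * MvPolynomial.esymm (Fin n) R c *
    ∑ p ∈ antidiagonal (n - 1 - c), tv R n i ^ p.1 * tv R n j ^ p.2

/-- the diagonal values -/
def SdP (i : Fin n) : Pn R n :=
  ∑ c ∈ range n, ((-1 : Pn R n) ^ (n - 1) * MvPolynomial.esymm (Fin n) R c) *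
    ((n - 1 - c + 1) • (- tv R n i) ^ (n - 1 - c))

lemma RijP_off [IsDomain R] {i j : Fin n} (hij : i ≠ j) : RijP R n i j = 0 := by
  have hx : tv R n i - tv R n j ≠ 0 :=
    sub_ne_zero.mpr (fun hh => hij (MvPolynomial.X_injective hh))
  have hmul : RijP R n i j * (tv R n i - tv R n j) = 0 := by
    rw [RijP, Finset.sum_mul]
    have step : ∀ c ∈ range n,
        ((-1) ^ c * MvPolynomial.esymm (Fin n) R c *
          ∑ p ∈ antidiagonal (n - 1 - c), tv R n i ^ p.1 * tv R n j ^ p.2)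
            * (tv R n i - tv R n j)
        = (-1) ^ c * Es c * (tv R n i ^ (n - c) - tv R n j ^ (n - c)) := by
      intro c hc
      have h1 : n - 1 - c + 1 = n - c := by
        have := mem_range.mp hc; omega
      rw [mul_assoc, sum_antidiag_pow_mul_sub, h1]
    rw [Finset.sum_congr rfl step]
    have hext : ∑ c ∈ range n, (-1 : Pn R n) ^ c * Es c *
          (tv R n i ^ (n - c) - tv R n j ^ (n - c))
        = ∑ c ∈ range (n + 1), (-1 : Pn R n) ^ c * Es c *
          (tv R n i ^ (n - c) - tv R n j ^ (n - c)) := by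
      rw [Finset.sum_range_succ, Nat.sub_self, pow_zero, pow_zero, sub_self, mul_zero, add_zero]
    rw [hext]
    simp only [mul_sub]
    rw [Finset.sum_sub_distrib, vieta_zero, vieta_zero, sub_zero]
  exact (mul_eq_zero.mp hmul).resolve_right hx

lemma RijP_diag (i : Fin n) : RijP R n i i = SdP R n i := by
  rw [RijP, SdP]
  refine Finset.sum_congr rfl fun c hc => ?_
  have hcn : c < n := Finset.mem_range.mp hc
  have h1 : n - 1 - c + 1 = n - c := by omega
  rw [sum_antidiag_pow_diag, h1, neg_pow]
  have hs := sign_flip (S := Pn R n) (n - 1) c (by omega)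
  have h2 : n - 1 - c = n - 1 - c := rfl
  simp only [nsmul_eq_mul]
  rw [← hs]
  ring

end Identity


section IdB

open PowerSeries Finset.Nat Finset

local notation "φB" => algebraMap (Pn R n) (Bn R n)
local notation "Es" => MvPolynomial.esymm (Fin n) R

lemma Xel_mul_Yel (a b : ℕ) :
    Xel R n (a + 1) * Yel R n (b + 1)
      = ∑ i : Fin n, ∑ j : Fin n,
          φB (tv R n i ^ a * tv R n j ^ b) * (uu R n i * vv R n j) := by
  rw [Xel, Yel, Finset.sum_mul_sum]
  simp only [Nat.add_sub_cancel]
  refine Finset.sum_congr rfl fun i _ => Finset.sum_congr rfl fun j _ => ?_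
  have hc : uu R n i * φB (tv R n j ^ b) = φB (tv R n j ^ b) * uu R n i :=
    (Algebra.commutes _ _).symm
  calc (φB (tv R n i ^ a) * uu R n i) * (φB (tv R n j ^ b) * vv R n j)
      = φB (tv R n i ^ a) * (uu R n i * φB (tv R n j ^ b)) * vv R n j := by noncomm_ring
    _ = φB (tv R n i ^ a) * (φB (tv R n j ^ b) * uu R n i) * vv R n j := by rw [hc]
    _ = (φB (tv R n i ^ a) * φB (tv R n j ^ b)) * (uu R n i * vv R n j) := by noncomm_ring
    _ = φB (tv R n i ^ a * tv R n j ^ b) * (uu R n i * vv R n j) := by rw [map_mul]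

lemma XYsum (m : ℕ) :
    ∑ p ∈ antidiagonal m, Xel R n (p.1 + 1) * Yel R n (p.2 + 1)
      = ∑ i : Fin n, ∑ j : Fin n,
          φB (∑ p ∈ antidiagonal m, tv R n i ^ p.1 * tv R n j ^ p.2)
            * (uu R n i * vv R n j) := by
  rw [Finset.sum_congr rfl fun p (_ : p ∈ antidiagonal m) => Xel_mul_Yel R n p.1 p.2]
  rw [Finset.sum_comm]
  refine Finset.sum_congr rfl fun i _ => ?_
  rw [Finset.sum_comm]
  refine Finset.sum_congr rfl fun j _ => ?_
  rw [map_sum, Finset.sum_mul]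

lemma sum_swap3 {M : Type*} [AddCommMonoid M] {α β γ : Type*} (A : Finset α) (B : Finset β)
    (C : Finset γ) (f : α → β → γ → M) :
    ∑ a ∈ A, ∑ b ∈ B, ∑ c ∈ C, f a b c = ∑ b ∈ B, ∑ c ∈ C, ∑ a ∈ A, f a b c := by
  rw [Finset.sum_comm]
  exact Finset.sum_congr rfl fun b _ => Finset.sum_comm

lemma idB_rhs :
    ∑ c ∈ range n, φB ((-1) ^ c * Es c) *
        (∑ p ∈ antidiagonal (n - 1 - c), Xel R n (p.1 + 1) * Yel R n (p.2 + 1))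
      = ∑ i : Fin n, ∑ j : Fin n, φB (RijP R n i j) * (uu R n i * vv R n j) := by
  calc ∑ c ∈ range n, φB ((-1) ^ c * Es c) *
        (∑ p ∈ antidiagonal (n - 1 - c), Xel R n (p.1 + 1) * Yel R n (p.2 + 1))
      = ∑ c ∈ range n, φB ((-1) ^ c * Es c) *
          (∑ i : Fin n, ∑ j : Fin n,
            φB (∑ p ∈ antidiagonal (n - 1 - c), tv R n i ^ p.1 * tv R n j ^ p.2)
              * (uu R n i * vv R n j)) :=
        Finset.sum_congr rfl fun c _ => by rw [XYsum R n (n - 1 - c)]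
    _ = ∑ c ∈ range n, ∑ i : Fin n, ∑ j : Fin n, φB ((-1) ^ c * Es c) *
          (φB (∑ p ∈ antidiagonal (n - 1 - c), tv R n i ^ p.1 * tv R n j ^ p.2)
            * (uu R n i * vv R n j)) := by
        simp only [Finset.mul_sum]
    _ = ∑ i : Fin n, ∑ j : Fin n, ∑ c ∈ range n, φB ((-1) ^ c * Es c) *
          (φB (∑ p ∈ antidiagonal (n - 1 - c), tv R n i ^ p.1 * tv R n j ^ p.2)
            * (uu R n i * vv R n j)) := sum_swap3 _ _ _ _
    _ = ∑ i : Fin n, ∑ j : Fin n, φB (RijP R n i j) * (uu R n i * vv R n j) := by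
        refine Finset.sum_congr rfl fun i _ => Finset.sum_congr rfl fun j _ => ?_
        rw [RijP, map_sum, Finset.sum_mul]
        refine Finset.sum_congr rfl fun c _ => ?_
        rw [← mul_assoc, ← map_mul]

lemma idB_lhs :
    ∑ c ∈ range n, φB ((-1) ^ (n - 1) * Es c) * Gc R n (n - 1 - c)
      = ∑ i : Fin n, φB (SdP R n i) * (uu R n i * vv R n i) := by
  calc ∑ c ∈ range n, φB ((-1) ^ (n - 1) * Es c) * Gc R n (n - 1 - c)
      = ∑ c ∈ range n, ∑ i : Fin n, φB ((-1) ^ (n - 1) * Es c) *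
          (ww R n i * φB ((n - 1 - c + 1) • (- tv R n i) ^ (n - 1 - c))) := by
        refine Finset.sum_congr rfl fun c _ => ?_
        rw [Gc, Finset.mul_sum]
    _ = ∑ c ∈ range n, ∑ i : Fin n,
          (φB (((-1) ^ (n - 1) * Es c) * ((n - 1 - c + 1) • (- tv R n i) ^ (n - 1 - c))))
            * ww R n i := by
        refine Finset.sum_congr rfl fun c _ => Finset.sum_congr rfl fun i _ => ?_
        rw [(ww_commute R n i (φB ((n - 1 - c + 1) • (- tv R n i) ^ (n - 1 - c)))).eq,
          ← mul_assoc, ← map_mul]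
    _ = ∑ i : Fin n, ∑ c ∈ range n,
          (φB (((-1) ^ (n - 1) * Es c) * ((n - 1 - c + 1) • (- tv R n i) ^ (n - 1 - c))))
            * ww R n i := Finset.sum_comm
    _ = ∑ i : Fin n, φB (SdP R n i) * (uu R n i * vv R n i) := by
        refine Finset.sum_congr rfl fun i _ => ?_
        rw [SdP, map_sum, Finset.sum_mul]
        rfl

lemma idB [IsDomain R] :
    ∑ c ∈ range n, φB ((-1) ^ (n - 1) * Es c) * Gc R n (n - 1 - c)
      = ∑ c ∈ range n, φB ((-1) ^ c * Es c) *
          (∑ p ∈ antidiagonal (n - 1 - c), Xel R n (p.1 + 1) * Yel R n (p.2 + 1)) := by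
  rw [idB_lhs, idB_rhs]
  refine (Finset.sum_congr rfl fun i _ => ?_).symm
  rw [Finset.sum_eq_single i
    (fun j _ hji => by rw [RijP_off R n (Ne.symm hji), map_zero, zero_mul])
    (fun h => absurd (Finset.mem_univ i) h)]
  rw [RijP_diag]

end IdB


section MemGeneral

open PowerSeries Finset.Nat Finset

local notation "φB" => algebraMap (Pn R n) (Bn R n)
local notation "Es" => MvPolynomial.esymm (Fin n) R

lemma Gc_top [IsDomain R] (hn : 1 ≤ n) :
    ∑ c ∈ range (n - 1), φB ((-1) ^ (n - 1) * Es (c + 1)) * Gc R n (n - 1 - (c + 1))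
      + φB ((-1) ^ (n - 1)) * Gc R n (n - 1)
    = ∑ c ∈ range n, φB ((-1) ^ c * Es c) *
        (∑ p ∈ antidiagonal (n - 1 - c), Xel R n (p.1 + 1) * Yel R n (p.2 + 1)) := by
  obtain ⟨m, rfl⟩ : ∃ m, n = m + 1 := ⟨n - 1, (Nat.succ_pred_eq_of_pos hn).symm⟩
  have hid := idB R (m + 1)
  rw [Finset.sum_range_succ'] at hid
  simp only [Nat.add_sub_cancel] at hid ⊢
  rw [MvPolynomial.esymm_zero, mul_one, Nat.sub_zero] at hid
  exact hid

/-- the generating set -/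
def SGen : Set (Bn R n) :=
  {x : Bn R n |
    (∃ l, 1 ≤ l ∧ l ≤ n ∧ (x = Xel R n l ∨ x = Yel R n l)) ∨
    (∃ l, 1 ≤ l ∧ l < n ∧ x = Zel R n l)}

/-- the adjoined subalgebra -/
def AdjA : Subalgebra ↥(MvPolynomial.symmetricSubalgebra (Fin n) R) (Bn R n) :=
  Algebra.adjoin ↥(MvPolynomial.symmetricSubalgebra (Fin n) R) (SGen R n)

lemma hφmem (p : Pn R n) (hp : p ∈ MvPolynomial.symmetricSubalgebra (Fin n) R) :
    φB p ∈ AdjA R n :=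
  (AdjA R n).algebraMap_mem (⟨p, hp⟩ : ↥(MvPolynomial.symmetricSubalgebra (Fin n) R))

lemma hXmem (l : ℕ) (h1 : 1 ≤ l) (h2 : l ≤ n) : Xel R n l ∈ AdjA R n :=
  Algebra.subset_adjoin (Or.inl ⟨l, h1, h2, Or.inl rfl⟩)

lemma hYmem (l : ℕ) (h1 : 1 ≤ l) (h2 : l ≤ n) : Yel R n l ∈ AdjA R n :=
  Algebra.subset_adjoin (Or.inl ⟨l, h1, h2, Or.inr rfl⟩)

lemma hZmem (l : ℕ) (h1 : 1 ≤ l) (h2 : l < n) : Zel R n l ∈ AdjA R n :=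
  Algebra.subset_adjoin (Or.inr ⟨l, h1, h2, rfl⟩)

lemma hsgn (k : ℕ) : ((-1 : Pn R n) ^ k) ∈ MvPolynomial.symmetricSubalgebra (Fin n) R := by
  have h : ((-1 : Pn R n) ^ k) = algebraMap R (Pn R n) ((-1 : R) ^ k) := by
    rw [map_pow, map_neg, map_one]
  rw [h]
  exact (MvPolynomial.symmetricSubalgebra (Fin n) R).algebraMap_mem _

lemma hEsmem (k c : ℕ) :
    ((-1 : Pn R n) ^ k * MvPolynomial.esymm (Fin n) R c)
      ∈ MvPolynomial.symmetricSubalgebra (Fin n) R :=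
  mul_mem (hsgn R n k) ((MvPolynomial.mem_symmetricSubalgebra _).2
    (MvPolynomial.esymm_isSymmetric _ _ _))

lemma Gc_mem [IsDomain R] (hn : 1 ≤ n) : ∀ k, k < n → Gc R n k ∈ AdjA R n := by
  intro k
  induction k using Nat.strong_induction_on with
  | _ k ih =>
    intro hk
    by_cases hk1 : k + 1 < n
    · -- use the differential recursion
      cases k with
      | zero =>
          have hrec := key_recursion R n 0
          simp only [Finset.Nat.antidiagonal_zero, Finset.sum_singleton, Zel_zero, mul_one,
            one_smul, zero_add] at hrec
          have h1 := hZmem R n 1 le_rfl hk1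
          rwa [hrec] at h1
      | succ k' =>
          have hrec := key_recursion R n (k' + 1)
          rw [Finset.Nat.sum_antidiagonal_succ', Zel_zero, mul_one] at hrec
          have heq := eq_sub_of_add_eq hrec.symm
          rw [heq]
          refine sub_mem (nsmul_mem (hZmem R n _ (by omega) (by omega)) _)
            (sum_mem fun p hp => ?_)
          have hpe : p.1 + p.2 = k' := Finset.HasAntidiagonal.mem_antidiagonal.mp hp
          exact mul_mem (ih p.1 (by omega) (by omega)) (hZmem R n _ (by omega) (by omega))
    · -- top coefficient, use the X/Y identity
      have hk2 : k = n - 1 := by omega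
      subst hk2
      have hid := Gc_top R n hn
      rw [add_comm] at hid
      have hf0 := eq_sub_of_add_eq hid
      have hmem0 : φB ((-1) ^ (n - 1)) * Gc R n (n - 1) ∈ AdjA R n := by
        rw [hf0]
        refine sub_mem (sum_mem fun c hc => ?_) (sum_mem fun c hc => ?_)
        · refine mul_mem (hφmem R n _ (hEsmem R n c c)) (sum_mem fun p hp => ?_)
          have hpe : p.1 + p.2 = n - 1 - c := Finset.HasAntidiagonal.mem_antidiagonal.mp hp
          exact mul_mem (hXmem R n _ (by omega) (by omega))
            (hYmem R n _ (by omega) (by omega))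
        · have hcr : c < n - 1 := Finset.mem_range.mp hc
          exact mul_mem (hφmem R n _ (hEsmem R n (n - 1) (c + 1)))
            (ih (n - 1 - (c + 1)) (by omega) (by omega))
      have hsq : φB ((-1) ^ (n - 1)) * φB ((-1) ^ (n - 1)) = 1 := by
        rw [← map_mul, ← pow_add, Even.neg_one_pow ⟨n - 1, rfl⟩, map_one]
      have hGeq : Gc R n (n - 1)
          = φB ((-1) ^ (n - 1)) * (φB ((-1) ^ (n - 1)) * Gc R n (n - 1)) := by
        rw [← mul_assoc, hsq, one_mul]
      rw [hGeq]
      exact mul_mem (hφmem R n _ (hsgn R n (n - 1))) hmem0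

lemma nZn_mem [IsDomain R] (hn : 1 ≤ n) : n • Zel R n n ∈ AdjA R n := by
  have hkey := key_recursion R n (n - 1)
  rw [show n - 1 + 1 = n from Nat.sub_add_cancel hn] at hkey
  rw [hkey]
  refine sum_mem fun p hp => ?_
  have hpe : p.1 + p.2 = n - 1 := Finset.HasAntidiagonal.mem_antidiagonal.mp hp
  refine mul_mem (Gc_mem R n hn p.1 (by omega)) ?_
  rcases Nat.eq_zero_or_pos p.2 with h0 | h0
  · rw [h0, Zel_zero]; exact one_mem (AdjA R n)
  · exact hZmem R n p.2 h0 (by omega)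

end MemGeneral


/-- The coefficient ring `ℤ[1/n]`. -/
abbrev ZInv (n : ℕ) : Type := Localization.Away (n : ℤ)

/-- In `B ⊗ ℤ[1/n]`, the element `Z_n` lies in the `(Λ_n ⊗ ℤ[1/n])`-subalgebra generated by
the `3n - 1` elements `X_1,…,X_n, Y_1,…,Y_n, Z_1,…,Z_{n-1}`. -/
theorem Zn_mem_adjoin_of_invertible_n (n : ℕ) (hn : 1 ≤ n) :
    Zel (ZInv n) n n ∈
      Algebra.adjoin ↥(MvPolynomial.symmetricSubalgebra (Fin n) (ZInv n))
        {x : Bn (ZInv n) n |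
          (∃ l, 1 ≤ l ∧ l ≤ n ∧ (x = Xel (ZInv n) n l ∨ x = Yel (ZInv n) n l)) ∨
          (∃ l, 1 ≤ l ∧ l < n ∧ x = Zel (ZInv n) n l)} := by
  haveI : IsDomain (ZInv n) := by
    have hn0 : (n : ℤ) ≠ 0 := by
      simp only [ne_eq, Nat.cast_eq_zero]; omega
    exact IsLocalization.isDomain_localization
      (powers_le_nonZeroDivisors_of_noZeroDivisors hn0)
  show Zel (ZInv n) n n ∈ AdjA (ZInv n) n
  have hmemn : n • Zel (ZInv n) n n ∈ AdjA (ZInv n) n := nZn_mem (ZInv n) n hn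
  set c : ZInv n := IsLocalization.Away.invSelf (S := ZInv n) (n : ℤ) with hcdef
  have hc : (n : ZInv n) * c = 1 := by
    have h := IsLocalization.Away.mul_invSelf (S := ZInv n) ((n : ℤ))
    rwa [show (algebraMap ℤ (ZInv n)) (n : ℤ) = ((n : ℕ) : ZInv n) from
      map_natCast (algebraMap ℤ (ZInv n)) n] at h
  have heq : algebraMap (Pn (ZInv n) n) (Bn (ZInv n) n) (MvPolynomial.C c)
      * (n • Zel (ZInv n) n n) = Zel (ZInv n) n n := by
    rw [nsmul_eq_mul, ← mul_assoc]
    have h1 : algebraMap (Pn (ZInv n) n) (Bn (ZInv n) n) (MvPolynomial.C c)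
        * ((n : ℕ) : Bn (ZInv n) n) = 1 := by
      rw [show ((n : ℕ) : Bn (ZInv n) n)
          = algebraMap (Pn (ZInv n) n) (Bn (ZInv n) n) ((n : ℕ) : Pn (ZInv n) n) from
            (map_natCast _ n).symm,
        ← map_mul,
        show (MvPolynomial.C c) * ((n : ℕ) : Pn (ZInv n) n) = 1 from by
          rw [show ((n : ℕ) : Pn (ZInv n) n) = MvPolynomial.C ((n : ℕ) : ZInv n) from
            (map_natCast _ n).symm, ← map_mul, mul_comm c, hc, map_one],
        map_one]
    rw [h1, one_mul]
  rw [← heq]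
  exact mul_mem (hφmem (ZInv n) n _
    ((MvPolynomial.symmetricSubalgebra (Fin n) (ZInv n)).algebraMap_mem c)) hmemn

end
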